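/- If there exists a solution i1,…,im to the PCP instance L (i.e., u_{i1}…u_{im} = v_{i1}…v_{im}), then Spoiler has a winning strategy in the two-buffer simulation game with two unbounded buffers on the automata 𝒜_L and ℬ_L; i.e., 𝒜_L ⋢(ω,ω) ℬ_L. -/

import Mathlib

open scoped Classical

/-- A Büchi automaton over alphabet `S`. -/
structure BA (S : Type) where
  Q : Type
  init : Q
  trans : Q → S → Q → Prop
  acc : Q → Prop

/-- The Büchi language of `A`: infinite words with a run from the initial state
visiting accepting states infinitely often. -/
def BA.Lang {S : Type} (A : BA S) : Set (ℕ → S) :=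
  { w | ∃ ρ : ℕ → A.Q, ρ 0 = A.init ∧ (∀ n, A.trans (ρ n) (w n) (ρ (n+1))) ∧
        ∀ n, ∃ m, n ≤ m ∧ A.acc (ρ m) }

/-- A configuration of the two-buffer simulation game: Spoiler's state, contents of
the two FIFO buffers (head = oldest letter), Duplicator's state. -/
structure Cfg {S : Type} (A B : BA S) where
  qa : A.Q
  b1 : List S
  b2 : List S
  qb : B.Q

/-- The configuration after Spoiler's move `m = (a, q')`: his state becomes `q'` and
the letter `a` is appended to buffer `σ a` (`true` = buffer 1, `false` = buffer 2). -/
def midCfg {S : Type} {A B : BA S} (σ : S → Bool) (c : Cfg A B) (m : S × A.Q) : Cfg A B :=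
  ⟨m.2, if σ m.1 then c.b1 ++ [m.1] else c.b1, if σ m.1 then c.b2 else c.b2 ++ [m.1], c.qb⟩

/-- Applying a finite sequence of Duplicator consumption steps: each step picks a buffer
(`true` = buffer 1) and a successor state, consuming the oldest letter of that buffer
along a matching transition of `B`.  Returns `none` if some step is illegal. -/
noncomputable def dupApply {S : Type} (A B : BA S) :
    Cfg A B → List (Bool × B.Q) → Option (Cfg A B)
  | c, [] => some c
  | c, (j, p') :: ms =>
    if j then
      match c.b1 with
      | [] => none
      | b :: β => if B.trans c.qb b p' then dupApply A B ⟨c.qa, β, c.b2, p'⟩ ms else none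
    else
      match c.b2 with
      | [] => none
      | b :: β => if B.trans c.qb b p' then dupApply A B ⟨c.qa, c.b1, β, p'⟩ ms else none

/-- The configuration at the start of round `n` (i.e. after Duplicator's moves of
round `n-1`), given Spoiler's moves `sp` and Duplicator's responses `dm`;
`none` once an illegal move has occurred. -/
noncomputable def playCfg {S : Type} (A B : BA S) (σ : S → Bool)
    (sp : ℕ → S × A.Q) (dm : ℕ → List (Bool × B.Q)) : ℕ → Option (Cfg A B)
  | 0 => some ⟨A.init, [], [], B.init⟩
  | n+1 =>
    match playCfg A B σ sp dm n with
    | none => none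
    | some c =>
      if A.trans c.qa (sp n).1 (sp n).2 then dupApply A B (midCfg σ c (sp n)) (dm n) else none

/-- Number of letters put into buffer `j` by Spoiler during the first `n` rounds. -/
noncomputable def pushed {S : Type} {QA : Type} (σ : S → Bool) (sp : ℕ → S × QA)
    (j : Bool) (n : ℕ) : ℕ :=
  ((Finset.range n).filter fun i => σ (sp i).1 = j).card

/-- Number of letters consumed from buffer `j` by Duplicator during the first `n` rounds. -/
noncomputable def consumed {QB : Type} (dm : ℕ → List (Bool × QB)) (j : Bool) (n : ℕ) : ℕ :=
  ∑ i ∈ Finset.range n, ((dm i).filter fun x => x.1 = j).length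

/-- Duplicator's strategy is consistent with the moves `dm` of a play. -/
def Consistent {S : Type} (A B : BA S)
    (dstrat : List ((S × A.Q) × List (Bool × B.Q)) → (S × A.Q) → List (Bool × B.Q))
    (sp : ℕ → S × A.Q) (dm : ℕ → List (Bool × B.Q)) : Prop :=
  ∀ n, dm n = dstrat (List.ofFn fun i : Fin n => (sp i, dm i)) (sp n)

/-- Spoiler's moves are legal as long as the play is defined. -/
def SpLegal {S : Type} (A B : BA S) (σ : S → Bool)
    (sp : ℕ → S × A.Q) (dm : ℕ → List (Bool × B.Q)) : Prop :=
  ∀ n c, playCfg A B σ sp dm n = some c → A.trans c.qa (sp n).1 (sp n).2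

/-- Duplicator's winning condition for a play of the two-buffer game with
capacities `(k1, k2)`: the buffers never exceed their capacities (checked after her
moves), and either Spoiler's run visits accepting states only finitely often, or
every letter put into a buffer is eventually consumed and Duplicator's run visits
accepting states infinitely often. -/
def Win2 {S : Type} (A B : BA S) (σ : S → Bool) (k1 k2 : ℕ∞)
    (sp : ℕ → S × A.Q) (dm : ℕ → List (Bool × B.Q)) : Prop :=
  (∀ n c, playCfg A B σ sp dm n = some c →
      (c.b1.length : ℕ∞) ≤ k1 ∧ (c.b2.length : ℕ∞) ≤ k2) ∧
  ((∃ N, ∀ n, N ≤ n → ¬ A.acc (sp n).2) ∨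
    ((∀ n j, ∃ m, pushed σ sp j n ≤ consumed dm j m) ∧
     (∀ n, ∃ m, n ≤ m ∧ ∃ x ∈ dm m, B.acc x.2)))

/-- `dstrat` is a winning strategy for Duplicator in the two-buffer simulation game on
`A`, `B` with letter distribution `σ` and capacities `(k1, k2)`: against every legal
behaviour of Spoiler, all of Duplicator's prescribed moves are legal (the play never
breaks) and the resulting play is won by Duplicator. -/
def WinningStrat2 {S : Type} (A B : BA S) (σ : S → Bool) (k1 k2 : ℕ∞)
    (dstrat : List ((S × A.Q) × List (Bool × B.Q)) → (S × A.Q) → List (Bool × B.Q)) : Prop :=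
  ∀ sp dm, Consistent A B dstrat sp dm → SpLegal A B σ sp dm →
    (∀ n, (playCfg A B σ sp dm n).isSome) ∧ Win2 A B σ k1 k2 sp dm

/-- Two-buffer simulation `A ⊑(k1,k2) B`: Duplicator has a winning strategy. -/
def Sim2 {S : Type} (A B : BA S) (σ : S → Bool) (k1 k2 : ℕ∞) : Prop :=
  ∃ dstrat, WinningStrat2 A B σ k1 k2 dstrat
/-- The alphabet `{0, 1, #, 0̄, 1̄, #̄}` used in the PCP reduction. -/
inductive PL | z | o | hash | zb | ob | hashb
deriving DecidableEq

/-- Unbarred copy of a bit. -/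
def pl : Bool → PL | false => .z | true => .o

/-- Barred copy of a bit. -/
def br : Bool → PL | false => .zb | true => .ob

/-- The word `u · v̄` over `PL` associated with a PCP pair `(u, v)`. -/
def wrd (u v : List Bool) : List PL := u.map pl ++ v.map br

/-- The distribution function of the PCP reduction: unbarred letters go to
buffer 1 (`true`), barred letters to buffer 2 (`false`). -/
def σPL : PL → Bool
  | .z => true | .o => true | .hash => true
  | .zb => false | .ob => false | .hashb => false

/-- The automaton `𝒜_L` of the PCP reduction for the instance
`L = {(u i, v i) | i < nn}`.  States: `Sum.inl 0 = s` (initial), `Sum.inl 1 = t`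
(the common hub), `Sum.inl 2 = h` (between `#` and `#̄`), `Sum.inl 3 = r`
(accepting), and `Sum.inr (i, k)` for the internal states of the path reading
`u_i · v̄_i` (position `k` reached after `k` letters). -/
def AL (nn : ℕ) (u v : Fin nn → List Bool) : BA PL where
  Q := Fin 4 ⊕ (Fin nn × ℕ)
  init := Sum.inl 0
  acc := fun q => q = Sum.inl 3
  trans := fun q x q' =>
    (∃ i : Fin nn, (q = Sum.inl 0 ∨ q = Sum.inl 1) ∧
        (wrd (u i) (v i))[0]? = some x ∧ q' = Sum.inr (i, 1)) ∨
    (∃ i k, q = Sum.inr (i, k) ∧ (wrd (u i) (v i))[k]? = some x ∧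
        k + 1 < (wrd (u i) (v i)).length ∧ q' = Sum.inr (i, k + 1)) ∨
    (∃ i k, q = Sum.inr (i, k) ∧ (wrd (u i) (v i))[k]? = some x ∧
        k + 1 = (wrd (u i) (v i)).length ∧ q' = Sum.inl 1) ∨
    (q = Sum.inl 1 ∧ x = .hash ∧ q' = Sum.inl 2) ∨
    (q = Sum.inl 2 ∧ x = .hashb ∧ q' = Sum.inl 3) ∨
    (q = Sum.inl 3 ∧ x = .hash ∧ q' = Sum.inl 2)

/-- The automaton `ℬ_L` of the PCP reduction.  States (as elements of `Fin 7`):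
`0 = p0` (initial), `1 = p1`, `2 = p2`, `3 = p3`, `4 = p4`, `5 = p5` (accepting
sink), `6 = q`. -/
def BL : BA PL where
  Q := Fin 7
  init := 0
  acc := fun q => q = 5
  trans := fun q x q' =>
    (q = 0 ∧ x = .z ∧ q' = 2) ∨ (q = 2 ∧ x = .zb ∧ q' = 0) ∨
    (q = 0 ∧ x = .o ∧ q' = 4) ∨ (q = 4 ∧ x = .ob ∧ q' = 0) ∨
    (q = 0 ∧ x = .z ∧ q' = 1) ∨ (q = 1 ∧ (x = .ob ∨ x = .hashb) ∧ q' = 5) ∨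
    (q = 0 ∧ x = .o ∧ q' = 6) ∨ (q = 6 ∧ (x = .zb ∨ x = .hashb) ∧ q' = 5) ∨
    (q = 0 ∧ x = .hash ∧ q' = 3) ∨ (q = 3 ∧ (x = .zb ∨ x = .ob) ∧ q' = 5) ∨
    (q = 5 ∧ q' = 5)
namespace Spw

/-- Path predicate: from `q0`, the list of (letter, nextstate) pairs is a valid
run fragment of `A` ending in `q1`. -/
def IsPath {S : Type} (A : BA S) : A.Q → List (S × A.Q) → A.Q → Prop
  | q0, [], q1 => q0 = q1
  | q0, (x, q) :: t, q1 => A.trans q0 x q ∧ IsPath A q t q1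

lemma isPath_append {S : Type} {A : BA S} {l1 l2 : List (S × A.Q)} {q0 q1 q2 : A.Q}
    (h1 : IsPath A q0 l1 q1) (h2 : IsPath A q1 l2 q2) : IsPath A q0 (l1 ++ l2) q2 := by
  induction l1 generalizing q0 with
  | nil => cases h1; simpa using h2
  | cons a t ih =>
    obtain ⟨x, q⟩ := a
    exact ⟨h1.1, ih h1.2⟩

lemma isPath_get {S : Type} {A : BA S} (d : S × A.Q) :
    ∀ (l : List (S × A.Q)) (q0 q1 : A.Q), IsPath A q0 l q1 →
      ∀ n, n < l.length →
        A.trans (if n = 0 then q0 else (l.getD (n-1) d).2) (l.getD n d).1 (l.getD n d).2 := by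
  intro l
  induction l with
  | nil => intro q0 q1 h n hn; simp at hn
  | cons a t ih =>
    obtain ⟨x, q⟩ := a
    intro q0 q1 h n hn
    obtain ⟨htr, hpath⟩ := h
    match n with
    | 0 => simpa using htr
    | (m+1) =>
      have := ih q q1 hpath m (by simpa using hn)
      cases m with
      | zero => simpa using this
      | succ k => simpa using this

lemma isPath_lastD {S : Type} {A : BA S} (d : S × A.Q) :
    ∀ (l : List (S × A.Q)) (q0 q1 : A.Q), IsPath A q0 l q1 → 0 < l.length →
      (l.getD (l.length - 1) d).2 = q1 := by
  intro l
  induction l with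
  | nil => intro _ _ _ h; simp at h
  | cons a t ih =>
    obtain ⟨x, q⟩ := a
    intro q0 q1 h _
    obtain ⟨htr, hpath⟩ := h
    cases t with
    | nil => cases hpath; simp
    | cons b t' =>
      have := ih q q1 hpath (by simp)
      simpa using this

end Spw
namespace Spw2
open Spw

variable (nn : ℕ) (u v : Fin nn → List Bool)

abbrev QA (nn : ℕ) := Fin 4 ⊕ (Fin nn × ℕ)

/-- One step of the path through the piece `u_i · v̄_i`. -/
def pf (i : Fin nn) (k : ℕ) : PL × QA nn :=
  ((wrd (u i) (v i)).getD k .hash,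
    if k + 1 = (wrd (u i) (v i)).length then Sum.inl 1 else Sum.inr (i, k+1))

def piecePath (i : Fin nn) : List (PL × QA nn) :=
  (List.range (wrd (u i) (v i)).length).map (pf nn u v i)

def steps (idx : List (Fin nn)) : List (PL × QA nn) :=
  (idx.map (piecePath nn u v)).flatten

def tailSeq : ℕ → PL × QA nn :=
  fun m => if m % 2 = 0 then (.hash, Sum.inl 2) else (.hashb, Sum.inl 3)

noncomputable def sp (idx : List (Fin nn)) : ℕ → PL × QA nn :=
  fun n => ((steps nn u v idx).getD n (tailSeq nn (n - (steps nn u v idx).length)))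

lemma wrd_len_pos {a b : List Bool} (ha : a ≠ []) (hb : b ≠ []) :
    2 ≤ (wrd a b).length := by
  have h1 : 0 < a.length := List.length_pos_iff.2 ha
  have h2 : 0 < b.length := List.length_pos_iff.2 hb
  simp [wrd]; omega

lemma get?_eq {l : List PL} {k : ℕ} (h : k < l.length) :
    l[k]? = some (l.getD k .hash) := by
  rw [List.getD_eq_getElem l _ h]
  exact List.getElem?_eq_getElem h

lemma isPath_piece_tail (i : Fin nn) :
    ∀ dd kk, 1 ≤ kk → kk + (dd + 1) = (wrd (u i) (v i)).length →
      IsPath (AL nn u v) (Sum.inr (i, kk))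
        ((List.range' kk (dd+1)).map (pf nn u v i)) (Sum.inl 1) := by
  intro dd
  induction dd with
  | zero =>
    intro kk hk hlen
    refine ⟨?_, ?_⟩
    · show (AL nn u v).trans _ _ _
      refine Or.inr (Or.inr (Or.inl ⟨i, kk, rfl, ?_, ?_, ?_⟩))
      · exact get?_eq (by omega)
      · omega
      · show (pf nn u v i kk).2 = Sum.inl 1
        unfold pf
        rw [if_pos (by omega)]
    · rw [if_pos (by omega)]
      exact rfl
  | succ d ih =>
    intro kk hk hlen
    rw [List.range'_succ]; erw [List.map_cons]
    refine ⟨?_, ?_⟩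
    · show (AL nn u v).trans _ _ _
      refine Or.inr (Or.inl ⟨i, kk, rfl, ?_, ?_, ?_⟩)
      · exact get?_eq (by omega)
      · omega
      · simp [pf]; omega
    · rw [if_neg (by omega)]
      exact ih (kk+1) (by omega) (by omega)

lemma isPath_piece (i : Fin nn) (hu : u i ≠ []) (hv : v i ≠ [])
    (q0 : QA nn) (h0 : q0 = Sum.inl 0 ∨ q0 = Sum.inl 1) :
    IsPath (AL nn u v) q0 (piecePath nn u v i) (Sum.inl 1) := by
  have hL : 2 ≤ (wrd (u i) (v i)).length := wrd_len_pos hu hv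
  set L := (wrd (u i) (v i)).length with hLdef
  have hrange : List.range L = 0 :: List.range' 1 (L-1) := by
    rw [List.range_eq_range']
    have : L = (L - 1) + 1 := by omega
    rw [this, List.range'_succ]
    congr 1
  unfold piecePath
  rw [← hLdef, hrange, List.map_cons]
  refine ⟨?_, ?_⟩
  · show (AL nn u v).trans _ _ _
    refine Or.inl ⟨i, h0, ?_, ?_⟩
    · exact get?_eq (by omega)
    · simp [pf, ← hLdef]; omega
  · rw [if_neg (by omega)]
    have : L - 1 = (L - 2) + 1 := by omega
    rw [this]
    exact isPath_piece_tail nn u v i (L-2) 1 le_rfl (by omega)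

lemma isPath_steps_one (hu : ∀ i, u i ≠ []) (hv : ∀ i, v i ≠ []) :
    ∀ l : List (Fin nn), IsPath (AL nn u v) (Sum.inl 1)
      ((l.map (piecePath nn u v)).flatten) (Sum.inl 1) := by
  intro l
  induction l with
  | nil => simp [IsPath]; rfl
  | cons i t ih =>
    rw [List.map_cons, List.flatten_cons]
    exact isPath_append (isPath_piece nn u v i (hu i) (hv i) _ (Or.inr rfl)) ih

lemma isPath_steps (hu : ∀ i, u i ≠ []) (hv : ∀ i, v i ≠ [])
    (idx : List (Fin nn)) (hne : idx ≠ []) :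
    IsPath (AL nn u v) (Sum.inl 0) (steps nn u v idx) (Sum.inl 1) := by
  obtain ⟨i, t, rfl⟩ := List.exists_cons_of_ne_nil hne
  unfold steps
  rw [List.map_cons, List.flatten_cons]
  exact isPath_append (isPath_piece nn u v i (hu i) (hv i) _ (Or.inl rfl))
    (isPath_steps_one nn u v hu hv t)

lemma steps_len_pos (hu : ∀ i, u i ≠ []) (hv : ∀ i, v i ≠ [])
    (idx : List (Fin nn)) (hne : idx ≠ []) : 0 < (steps nn u v idx).length := by
  obtain ⟨i, t, rfl⟩ := List.exists_cons_of_ne_nil hne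
  unfold steps
  rw [List.map_cons, List.flatten_cons, List.length_append]
  have := wrd_len_pos (hu i) (hv i)
  simp [piecePath]
  omega

end Spw2
namespace Spw2
open Spw

variable (nn : ℕ) (u v : Fin nn → List Bool) (idx : List (Fin nn))

/-- the state before Spoiler's move `n`. -/
noncomputable def stq : ℕ → QA nn :=
  fun n => if n = 0 then Sum.inl 0 else (sp nn u v idx (n-1)).2

lemma sp_tail {n : ℕ} (h : (steps nn u v idx).length ≤ n) :
    sp nn u v idx n = tailSeq nn (n - (steps nn u v idx).length) :=
  List.getD_eq_default _ _ h

lemma sp_lt {n : ℕ} (h : n < (steps nn u v idx).length) (d : PL × QA nn) :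
    sp nn u v idx n = (steps nn u v idx).getD n d := by
  unfold sp
  rw [List.getD_eq_getElem _ _ h, List.getD_eq_getElem _ _ h]

lemma run_valid (hu : ∀ i, u i ≠ []) (hv : ∀ i, v i ≠ []) (hne : idx ≠ []) :
    ∀ n, (AL nn u v).trans (stq nn u v idx n) (sp nn u v idx n).1 (sp nn u v idx n).2 := by
  intro n
  have hpath := isPath_steps nn u v hu hv idx hne
  have hlen := steps_len_pos nn u v hu hv idx hne
  have hd : ∃ d : PL × QA nn, True := ⟨(.hash, Sum.inl 0), trivial⟩
  obtain ⟨d, -⟩ := hd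
  rcases lt_trichotomy n (steps nn u v idx).length with hn | hn | hn
  · have hget := isPath_get d _ _ _ hpath n hn
    have h1 : sp nn u v idx n = (steps nn u v idx).getD n d := sp_lt nn u v idx hn d
    unfold stq
    rw [h1]
    by_cases h0 : n = 0
    · subst h0; simp only [↓reduceIte] at hget ⊢; exact hget
    · rw [if_neg h0]
      have h2 : sp nn u v idx (n-1) = (steps nn u v idx).getD (n-1) d := sp_lt nn u v idx (by omega) d
      rw [h2]; erw [if_neg h0] at hget
      exact hget
  · have h1 : sp nn u v idx n = tailSeq nn 0 := by
      rw [sp_tail nn u v idx (le_of_eq hn.symm)]; congr 1; omega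
    have h2 : sp nn u v idx (n - 1) = (steps nn u v idx).getD (n-1) d :=
      sp_lt nn u v idx (by omega) d
    have h3 := isPath_lastD d _ _ _ hpath hlen
    unfold stq
    rw [if_neg (by omega), h1, h2, hn]; erw [h3]
    show (AL nn u v).trans _ _ _
    exact Or.inr (Or.inr (Or.inr (Or.inl ⟨rfl, rfl, rfl⟩)))
  · have h1 : sp nn u v idx n = tailSeq nn (n - (steps nn u v idx).length) :=
      sp_tail nn u v idx (by omega)
    have h2 : sp nn u v idx (n-1) = tailSeq nn (n-1 - (steps nn u v idx).length) :=
      sp_tail nn u v idx (by omega)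
    unfold stq
    rw [if_neg (by omega), h1, h2]
    unfold tailSeq
    by_cases hpar : (n - (steps nn u v idx).length) % 2 = 0
    · rw [if_pos hpar, if_neg (by omega)]
      show (AL nn u v).trans _ _ _
      exact Or.inr (Or.inr (Or.inr (Or.inr (Or.inr ⟨rfl, rfl, rfl⟩))))
    · rw [if_neg hpar, if_pos (by omega)]
      show (AL nn u v).trans _ _ _
      exact Or.inr (Or.inr (Or.inr (Or.inr (Or.inl ⟨rfl, rfl, rfl⟩))))

lemma sp_acc (N : ℕ) :
    (sp nn u v idx ((steps nn u v idx).length + 2*N + 1)).2 = Sum.inl 3 := by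
  rw [sp_tail nn u v idx (by omega)]
  unfold tailSeq
  rw [if_neg (by omega)]

end Spw2
namespace Spw2
open Spw

variable (nn : ℕ) (u v : Fin nn → List Bool) (idx : List (Fin nn))

/-- The common flattening. -/
def sS : List Bool := (idx.map u).flatten

/-- `n`-th unbarred letter pushed to buffer 1. -/
def αf (n : ℕ) : PL :=
  if n < (sS nn u idx).length then pl ((sS nn u idx).getD n false) else .hash

/-- `n`-th barred letter pushed to buffer 2. -/
def βf (n : ℕ) : PL :=
  if n < (sS nn u idx).length then br ((sS nn u idx).getD n false) else .hashb

lemma abf (n : ℕ) :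
    (αf nn u idx n = .z ∧ βf nn u idx n = .zb) ∨
    (αf nn u idx n = .o ∧ βf nn u idx n = .ob) ∨
    (αf nn u idx n = .hash ∧ βf nn u idx n = .hashb) := by
  unfold αf βf
  by_cases h : n < (sS nn u idx).length
  · rw [if_pos h, if_pos h]
    cases (sS nn u idx).getD n false <;> simp [pl, br]
  · rw [if_neg h, if_neg h]; tauto

/-- The finite prefix word. -/
def Wd : List PL := (idx.map fun i => wrd (u i) (v i)).flatten

lemma getD_range_map (l : List PL) :
    (List.range l.length).map (fun k => l.getD k .hash) = l := by
  apply List.ext_getElem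
  · simp
  · intro n h1 h2
    simp only [List.getElem_map, List.getElem_range]
    exact List.getD_eq_getElem l _ (by simpa using h2)

lemma map_fst_steps : (steps nn u v idx).map Prod.fst = Wd nn u v idx := by
  unfold steps Wd
  rw [List.map_flatten, List.map_map]
  congr 1
  apply List.map_congr_left
  intro i _
  simp only [Function.comp_apply]
  unfold piecePath
  rw [List.map_map]
  have : (Prod.fst ∘ pf nn u v i) = fun k => (wrd (u i) (v i)).getD k .hash := rfl
  rw [this, getD_range_map]

lemma steps_length : (steps nn u v idx).length = (Wd nn u v idx).length := by
  rw [← map_fst_steps, List.length_map]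

/-- The infinite `# #̄` tail, first `m` letters. -/
def Tl (m : ℕ) : List PL :=
  (List.range m).map (fun j => if j % 2 = 0 then PL.hash else PL.hashb)

lemma filter_wrd (a b : List Bool) :
    (wrd a b).filter (fun x => σPL x == true) = a.map pl ∧
    (wrd a b).filter (fun x => σPL x == false) = b.map br := by
  unfold wrd
  constructor <;> rw [List.filter_append, List.filter_map, List.filter_map]
  · have h1 : (fun x => σPL x == true) ∘ pl = fun _ => true := by
      funext x; cases x <;> rfl
    have h2 : (fun x => σPL x == true) ∘ br = fun _ => false := by
      funext x; cases x <;> rfl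
    rw [h1, h2]; simp
  · have h1 : (fun x => σPL x == false) ∘ pl = fun _ => false := by
      funext x; cases x <;> rfl
    have h2 : (fun x => σPL x == false) ∘ br = fun _ => true := by
      funext x; cases x <;> rfl
    rw [h1, h2]; simp

lemma filter_Wd_true :
    (Wd nn u v idx).filter (fun x => σPL x == true) = (sS nn u idx).map pl := by
  unfold Wd sS
  rw [List.filter_flatten, List.map_map]
  have h : idx.map ((List.filter fun x => σPL x == true) ∘ fun i => wrd (u i) (v i))
      = idx.map (fun i => (u i).map pl) := by
    apply List.map_congr_left
    intro i _
    simp only [Function.comp_apply]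
    exact (filter_wrd (u i) (v i)).1
  rw [h, show idx.map (fun i => (u i).map pl) = (idx.map u).map (List.map pl) by
    rw [List.map_map]; rfl, ← List.map_flatten]

lemma filter_Wd_false (heq : (idx.map u).flatten = (idx.map v).flatten) :
    (Wd nn u v idx).filter (fun x => σPL x == false) = (sS nn u idx).map br := by
  unfold Wd sS
  rw [List.filter_flatten, List.map_map]
  have h : idx.map ((List.filter fun x => σPL x == false) ∘ fun i => wrd (u i) (v i))
      = idx.map (fun i => (v i).map br) := by
    apply List.map_congr_left
    intro i _
    simp only [Function.comp_apply]
    exact (filter_wrd (u i) (v i)).2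
  rw [h, show idx.map (fun i => (v i).map br) = (idx.map v).map (List.map br) by
    rw [List.map_map]; rfl, ← List.map_flatten, ← heq]

lemma filter_Tl (k : ℕ) :
    (Tl (2*k)).filter (fun x => σPL x == true) = List.replicate k PL.hash ∧
    (Tl (2*k)).filter (fun x => σPL x == false) = List.replicate k PL.hashb := by
  induction k with
  | zero => simp [Tl]
  | succ m ih =>
    have h1 : 2*(m+1) = (2*m + 1) + 1 := by omega
    have h2 : Tl (2*(m+1)) = Tl (2*m) ++ [PL.hash, PL.hashb] := by
      unfold Tl
      rw [h1, List.range_succ, List.range_succ]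
      rw [List.map_append, List.map_append, List.append_assoc]
      congr 1
      simp only [List.map_cons, List.map_nil]
      rw [if_pos (by omega), if_neg (by omega)]
      rfl
    rw [h2, List.filter_append, List.filter_append, ih.1, ih.2]
    constructor
    · rw [show List.filter (fun x => σPL x == true) [PL.hash, PL.hashb] = [PL.hash] from rfl,
        ← List.replicate_succ']
    · rw [show List.filter (fun x => σPL x == false) [PL.hash, PL.hashb] = [PL.hashb] from rfl,
        ← List.replicate_succ']

end Spw2
namespace Spw2
open Spw

variable (nn : ℕ) (u v : Fin nn → List Bool) (idx : List (Fin nn))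

/-- First `n` letters played by Spoiler. -/
noncomputable def Pl (n : ℕ) : List PL :=
  List.ofFn (fun i : Fin n => (sp nn u v idx i).1)

lemma Pl_succ (n : ℕ) :
    Pl nn u v idx (n+1) = Pl nn u v idx n ++ [(sp nn u v idx n).1] := by
  unfold Pl
  rw [List.ofFn_succ']
  simp [List.concat_eq_append]

lemma pushed_eq (j : Bool) (n : ℕ) :
    pushed σPL (sp nn u v idx) j n
      = ((Pl nn u v idx n).filter (fun x => σPL x == j)).length := by
  induction n with
  | zero => simp [pushed, Pl]
  | succ m ih =>
    rw [Pl_succ, List.filter_append, List.length_append]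
    unfold pushed
    rw [Finset.range_add_one, Finset.filter_insert]
    by_cases h : σPL (sp nn u v idx m).1 = j
    · rw [if_pos h, Finset.card_insert_of_notMem (by simp)]
      unfold pushed at ih
      rw [ih, List.filter_cons, if_pos (by simpa using h)]
      simp
    · rw [if_neg h]
      unfold pushed at ih
      rw [ih, List.filter_cons, if_neg (by simpa using h)]
      simp

lemma Pl_take (n M : ℕ) (h : n ≤ (Wd nn u v idx).length + M) :
    Pl nn u v idx n = ((Wd nn u v idx) ++ Tl M).take n := by
  apply List.ext_getElem
  · simp [Pl, Tl]; omega
  · intro i h1 h2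
    have hi : i < n := by simpa [Pl] using h1
    rw [List.getElem_take]
    unfold Pl
    erw [List.getElem_ofFn]
    by_cases hW : i < (Wd nn u v idx).length
    · rw [List.getElem_append_left hW]
      have hi' : i < (steps nn u v idx).length := by
        rw [steps_length]; exact hW
      have h3 : (sp nn u v idx i) = (steps nn u v idx).getD i (.hash, Sum.inl 0) :=
        sp_lt nn u v idx hi' _
      rw [h3, List.getD_eq_getElem _ _ hi']
      have h4 : (Wd nn u v idx)[i] = ((steps nn u v idx).map Prod.fst)[i]'(by
          rw [map_fst_steps]; exact hW) := by
        congr 1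
        exact (map_fst_steps nn u v idx).symm
      rw [h4, List.getElem_map]
    · rw [List.getElem_append_right (by omega)]
      have hi' : (steps nn u v idx).length ≤ i := by
        rw [steps_length]; omega
      rw [sp_tail nn u v idx hi']
      unfold Tl tailSeq
      rw [List.getElem_map, List.getElem_range]
      rw [steps_length]
      by_cases hp : (i - (Wd nn u v idx).length) % 2 = 0
      · rw [if_pos hp, if_pos hp]
      · rw [if_neg hp, if_neg hp]

lemma prefix_snoc_getElem {γ : Type} {l : List γ} {a : γ} {L : List γ}
    (h : l ++ [a] <+: L) :
    ∃ hlt : l.length < L.length, L[l.length] = a := by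
  obtain ⟨r, hr⟩ := h
  subst hr
  have hlt : l.length < ((l ++ [a]) ++ r).length := by simp
  refine ⟨hlt, ?_⟩
  rw [List.getElem_append_left (by simp)]
  simp

lemma fullU_getElem (j k : ℕ) (hj : j < ((sS nn u idx).map pl ++ List.replicate k PL.hash).length) :
    ((sS nn u idx).map pl ++ List.replicate k PL.hash)[j] = αf nn u idx j := by
  by_cases h : j < (sS nn u idx).length
  · rw [List.getElem_append_left (by simpa using h), List.getElem_map]
    unfold αf
    rw [if_pos h, List.getD_eq_getElem _ _ h]
  · rw [List.getElem_append_right (by simpa using h), List.getElem_replicate]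
    unfold αf
    rw [if_neg h]

lemma fullB_getElem (j k : ℕ) (hj : j < ((sS nn u idx).map br ++ List.replicate k PL.hashb).length) :
    ((sS nn u idx).map br ++ List.replicate k PL.hashb)[j] = βf nn u idx j := by
  by_cases h : j < (sS nn u idx).length
  · rw [List.getElem_append_left (by simpa using h), List.getElem_map]
    unfold βf
    rw [if_pos h, List.getD_eq_getElem _ _ h]
  · rw [List.getElem_append_right (by simpa using h), List.getElem_replicate]
    unfold βf
    rw [if_neg h]

/-- The key fact: the letter played at round `n` is the next letter of the
appropriate projected sequence. -/
lemma sp_letter (heq : (idx.map u).flatten = (idx.map v).flatten) (n : ℕ) :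
    (σPL (sp nn u v idx n).1 = true →
      (sp nn u v idx n).1 = αf nn u idx (pushed σPL (sp nn u v idx) true n)) ∧
    (σPL (sp nn u v idx n).1 = false →
      (sp nn u v idx n).1 = βf nn u idx (pushed σPL (sp nn u v idx) false n)) := by
  have hpre : Pl nn u v idx (n+1) <+: (Wd nn u v idx) ++ Tl (2*(n+1)) := by
    rw [Pl_take nn u v idx (n+1) (2*(n+1)) (by omega)]
    exact List.take_prefix _ _
  constructor
  · intro hσ
    have hfil := hpre.filter (fun x => σPL x == true)
    rw [List.filter_append, filter_Wd_true, (filter_Tl (n+1)).1] at hfil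
    rw [Pl_succ, List.filter_append] at hfil
    rw [show List.filter (fun x => σPL x == true) [(sp nn u v idx n).1]
        = [(sp nn u v idx n).1] by rw [List.filter_cons, if_pos (by simpa using hσ)]; rfl] at hfil
    obtain ⟨hlt, hget⟩ := prefix_snoc_getElem hfil
    rw [fullU_getElem nn u idx _ _ hlt] at hget
    rw [← pushed_eq] at hget
    exact hget.symm
  · intro hσ
    have hfil := hpre.filter (fun x => σPL x == false)
    rw [List.filter_append, filter_Wd_false nn u v idx heq, (filter_Tl (n+1)).2] at hfil
    rw [Pl_succ, List.filter_append] at hfil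
    rw [show List.filter (fun x => σPL x == false) [(sp nn u v idx n).1]
        = [(sp nn u v idx n).1] by rw [List.filter_cons, if_pos (by simpa using hσ)]; rfl] at hfil
    obtain ⟨hlt, hget⟩ := prefix_snoc_getElem hfil
    rw [fullB_getElem nn u idx _ _ hlt] at hget
    rw [← pushed_eq] at hget
    exact hget.symm

end Spw2
namespace Spw2
open Spw

variable (nn : ℕ) (u v : Fin nn → List Bool) (idx : List (Fin nn))

/-- Invariant on Duplicator's state: `c1`/`c2` letters consumed from buffers 1/2. -/
def BInv (c1 c2 : ℕ) (q : Fin 7) : Prop :=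
  (q = 0 ∧ c1 = c2) ∨
  (q = 1 ∧ c2 + 1 = c1 ∧ αf nn u idx c2 = .z) ∨
  (q = 2 ∧ c2 + 1 = c1 ∧ αf nn u idx c2 = .z) ∨
  (q = 4 ∧ c2 + 1 = c1 ∧ αf nn u idx c2 = .o) ∨
  (q = 6 ∧ c2 + 1 = c1 ∧ αf nn u idx c2 = .o) ∨
  (q = 3 ∧ c2 + 1 = c1 ∧ αf nn u idx c2 = .hash)

lemma BL_trans_iff (q : Fin 7) (x : PL) (q' : Fin 7) : BL.trans q x q' ↔
    ((q = 0 ∧ x = .z ∧ q' = 2) ∨ (q = 2 ∧ x = .zb ∧ q' = 0) ∨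
    (q = 0 ∧ x = .o ∧ q' = 4) ∨ (q = 4 ∧ x = .ob ∧ q' = 0) ∨
    (q = 0 ∧ x = .z ∧ q' = 1) ∨ (q = 1 ∧ (x = .ob ∨ x = .hashb) ∧ q' = 5) ∨
    (q = 0 ∧ x = .o ∧ q' = 6) ∨ (q = 6 ∧ (x = .zb ∨ x = .hashb) ∧ q' = 5) ∨
    (q = 0 ∧ x = .hash ∧ q' = 3) ∨ (q = 3 ∧ (x = .zb ∨ x = .ob) ∧ q' = 5) ∨
    (q = 5 ∧ q' = 5)) := Iff.rfl

lemma BInv_ne5 {c1 c2 : ℕ} {q : Fin 7} (h : BInv nn u idx c1 c2 q) : q ≠ 5 := by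
  rcases h with ⟨hq,-⟩|⟨hq,-⟩|⟨hq,-⟩|⟨hq,-⟩|⟨hq,-⟩|⟨hq,-⟩ <;> subst hq <;> decide

lemma lemU {c1 c2 : ℕ} {q p' : Fin 7} (hB : BInv nn u idx c1 c2 q)
    (htr : BL.trans q (αf nn u idx c1) p') : BInv nn u idx (c1+1) c2 p' := by
  have hab := abf nn u idx c1
  rw [BL_trans_iff] at htr
  rcases hB with ⟨hq,hc⟩|⟨hq,hc,hα⟩|⟨hq,hc,hα⟩|⟨hq,hc,hα⟩|⟨hq,hc,hα⟩|⟨hq,hc,hα⟩ <;> subst hq <;>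
    rcases htr with ⟨h1,h2,h3⟩|⟨h1,h2,h3⟩|⟨h1,h2,h3⟩|⟨h1,h2,h3⟩|⟨h1,h2,h3⟩|⟨h1,h2,h3⟩|⟨h1,h2,h3⟩|⟨h1,h2,h3⟩|⟨h1,h2,h3⟩|⟨h1,h2,h3⟩|⟨h1,h3⟩ <;>
    try exact absurd h1 (by decide)
  -- q = 0 survivors, in rule order: (z→2), (o→4), (z→1), (o→6), (hash→3)
  · subst h3; exact Or.inr (Or.inr (Or.inl ⟨rfl, by omega, by rw [← hc]; exact h2⟩))
  · subst h3; exact Or.inr (Or.inr (Or.inr (Or.inl ⟨rfl, by omega, by rw [← hc]; exact h2⟩)))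
  · subst h3; exact Or.inr (Or.inl ⟨rfl, by omega, by rw [← hc]; exact h2⟩)
  · subst h3; exact Or.inr (Or.inr (Or.inr (Or.inr (Or.inl ⟨rfl, by omega, by rw [← hc]; exact h2⟩))))
  · subst h3; exact Or.inr (Or.inr (Or.inr (Or.inr (Or.inr ⟨rfl, by omega, by rw [← hc]; exact h2⟩))))
  -- q = 1: rule (1, ob/hashb, 5) impossible since αf c1 is unbarred
  · rcases hab with ⟨ha,-⟩|⟨ha,-⟩|⟨ha,-⟩ <;> rw [ha] at h2 <;>
      rcases h2 with h2|h2 <;> exact absurd h2 (by decide)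
  -- q = 2: rule (2, zb, 0)
  · rcases hab with ⟨ha,-⟩|⟨ha,-⟩|⟨ha,-⟩ <;> rw [ha] at h2 <;> exact absurd h2 (by decide)
  -- q = 4: rule (4, ob, 0)
  · rcases hab with ⟨ha,-⟩|⟨ha,-⟩|⟨ha,-⟩ <;> rw [ha] at h2 <;> exact absurd h2 (by decide)
  -- q = 6: rule (6, zb/hashb, 5)
  · rcases hab with ⟨ha,-⟩|⟨ha,-⟩|⟨ha,-⟩ <;> rw [ha] at h2 <;>
      rcases h2 with h2|h2 <;> exact absurd h2 (by decide)
  -- q = 3: rule (3, zb/ob, 5)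
  · rcases hab with ⟨ha,-⟩|⟨ha,-⟩|⟨ha,-⟩ <;> rw [ha] at h2 <;>
      rcases h2 with h2|h2 <;> exact absurd h2 (by decide)

lemma lemB {c1 c2 : ℕ} {q p' : Fin 7} (hB : BInv nn u idx c1 c2 q)
    (htr : BL.trans q (βf nn u idx c2) p') : BInv nn u idx c1 (c2+1) p' := by
  have hab := abf nn u idx c2
  rw [BL_trans_iff] at htr
  rcases hB with ⟨hq,hc⟩|⟨hq,hc,hα⟩|⟨hq,hc,hα⟩|⟨hq,hc,hα⟩|⟨hq,hc,hα⟩|⟨hq,hc,hα⟩ <;> subst hq <;>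
    rcases htr with ⟨h1,h2,h3⟩|⟨h1,h2,h3⟩|⟨h1,h2,h3⟩|⟨h1,h2,h3⟩|⟨h1,h2,h3⟩|⟨h1,h2,h3⟩|⟨h1,h2,h3⟩|⟨h1,h2,h3⟩|⟨h1,h2,h3⟩|⟨h1,h2,h3⟩|⟨h1,h3⟩ <;>
    try exact absurd h1 (by decide)
  -- q = 0 survivors: rules (0,z,2),(0,o,4),(0,z,1),(0,o,6),(0,hash,3): βf is barred, contra
  · rcases hab with ⟨-,hb⟩|⟨-,hb⟩|⟨-,hb⟩ <;> rw [hb] at h2 <;> exact absurd h2 (by decide)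
  · rcases hab with ⟨-,hb⟩|⟨-,hb⟩|⟨-,hb⟩ <;> rw [hb] at h2 <;> exact absurd h2 (by decide)
  · rcases hab with ⟨-,hb⟩|⟨-,hb⟩|⟨-,hb⟩ <;> rw [hb] at h2 <;> exact absurd h2 (by decide)
  · rcases hab with ⟨-,hb⟩|⟨-,hb⟩|⟨-,hb⟩ <;> rw [hb] at h2 <;> exact absurd h2 (by decide)
  · rcases hab with ⟨-,hb⟩|⟨-,hb⟩|⟨-,hb⟩ <;> rw [hb] at h2 <;> exact absurd h2 (by decide)
  -- q = 1: hα : αf c2 = z, so βf c2 = zb; rule needs ob/hashb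
  · rcases hab with ⟨ha,hb⟩|⟨ha,hb⟩|⟨ha,hb⟩ <;> rw [hα] at ha
    · rw [hb] at h2; rcases h2 with h2|h2 <;> exact absurd h2 (by decide)
    · exact absurd ha (by decide)
    · exact absurd ha (by decide)
  -- q = 2: rule (2,zb,0): ok
  · subst h3
    exact Or.inl ⟨rfl, by omega⟩
  -- q = 4: rule (4,ob,0): ok
  · subst h3
    exact Or.inl ⟨rfl, by omega⟩
  -- q = 6: hα : αf c2 = o ⇒ βf c2 = ob; rule needs zb/hashb
  · rcases hab with ⟨ha,hb⟩|⟨ha,hb⟩|⟨ha,hb⟩ <;> rw [hα] at ha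
    · exact absurd ha (by decide)
    · rw [hb] at h2; rcases h2 with h2|h2 <;> exact absurd h2 (by decide)
    · exact absurd ha (by decide)
  -- q = 3: hα : αf c2 = hash ⇒ βf c2 = hashb; rule needs zb/ob
  · rcases hab with ⟨ha,hb⟩|⟨ha,hb⟩|⟨ha,hb⟩ <;> rw [hα] at ha
    · exact absurd ha (by decide)
    · exact absurd ha (by decide)
    · rw [hb] at h2; rcases h2 with h2|h2 <;> exact absurd h2 (by decide)

end Spw2
namespace Spw2
open Spw

variable (nn : ℕ) (u v : Fin nn → List Bool) (idx : List (Fin nn))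

/-- Invariant on configurations: the buffers are segments of the pushed sequences
and the Duplicator state satisfies `BInv`. -/
def CInv (P1 P2 : ℕ) (c : Cfg (AL nn u v) BL) : Prop :=
  ∃ c1 c2, c1 ≤ P1 ∧ c2 ≤ P2 ∧
    c.b1 = (List.range' c1 (P1 - c1)).map (αf nn u idx) ∧
    c.b2 = (List.range' c2 (P2 - c2)).map (βf nn u idx) ∧
    BInv nn u idx c1 c2 c.qb

lemma dup_inv (P1 P2 : ℕ) :
    ∀ (ms : List (Bool × BL.Q)) (c c' : Cfg (AL nn u v) BL),
      CInv nn u v idx P1 P2 c → dupApply (AL nn u v) BL c ms = some c' →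
      CInv nn u v idx P1 P2 c' ∧ ∀ x ∈ ms, x.2 ≠ (5 : Fin 7) := by
  intro ms
  induction ms with
  | nil =>
    intro c c' hC h
    unfold dupApply at h
    cases h
    exact ⟨hC, by simp⟩
  | cons m t ih =>
    obtain ⟨j, p'⟩ := m
    intro c c' hC h
    obtain ⟨c1, c2, hc1, hc2, hb1, hb2, hB⟩ := hC
    unfold dupApply at h
    cases j with
    | true =>
      rw [if_pos rfl] at h
      rcases hk : P1 - c1 with _ | k
      · rw [hk] at hb1
        simp only [List.range'] at hb1
        rw [List.map_nil] at hb1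
        rw [hb1] at h
        exact absurd h (by simp)
      · rw [hk, List.range'_succ, List.map_cons] at hb1
        rw [hb1] at h
        simp only [] at h
        split at h
        case isTrue htr =>
          have hB' := lemU nn u idx hB htr
          have hC' : CInv nn u v idx P1 P2
              ⟨c.qa, (List.range' (c1+1) k).map (αf nn u idx), c.b2, p'⟩ :=
            ⟨c1+1, c2, by omega, hc2, by rw [show P1 - (c1+1) = k from by omega], hb2, hB'⟩
          obtain ⟨hCf, hall⟩ := ih _ c' hC' h
          refine ⟨hCf, ?_⟩
          intro x hx
          rcases List.mem_cons.1 hx with rfl | hx'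
          · exact BInv_ne5 nn u idx hB'
          · exact hall x hx'
        case isFalse => exact absurd h (by simp)
    | false =>
      rw [if_neg (by simp)] at h
      rcases hk : P2 - c2 with _ | k
      · rw [hk] at hb2
        simp only [List.range'] at hb2
        rw [List.map_nil] at hb2
        rw [hb2] at h
        exact absurd h (by simp)
      · rw [hk, List.range'_succ, List.map_cons] at hb2
        rw [hb2] at h
        simp only [] at h
        split at h
        case isTrue htr =>
          have hB' := lemB nn u idx hB htr
          have hC' : CInv nn u v idx P1 P2
              ⟨c.qa, c.b1, (List.range' (c2+1) k).map (βf nn u idx), p'⟩ :=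
            ⟨c1, c2+1, hc1, by omega, hb1, by rw [show P2 - (c2+1) = k from by omega], hB'⟩
          obtain ⟨hCf, hall⟩ := ih _ c' hC' h
          refine ⟨hCf, ?_⟩
          intro x hx
          rcases List.mem_cons.1 hx with rfl | hx'
          · exact BInv_ne5 nn u idx hB'
          · exact hall x hx'
        case isFalse => exact absurd h (by simp)

lemma dupApply_qa {S : Type} (A B : BA S) :
    ∀ (ms : List (Bool × B.Q)) (c c' : Cfg A B),
      dupApply A B c ms = some c' → c'.qa = c.qa := by
  intro ms
  induction ms with
  | nil => intro c c' h; unfold dupApply at h; cases h; rfl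
  | cons m t ih =>
    obtain ⟨j, p'⟩ := m
    intro c c' h
    unfold dupApply at h
    cases j with
    | true =>
      rw [if_pos rfl] at h
      rcases hb : c.b1 with _ | ⟨b, β⟩ <;> rw [hb] at h
      · exact absurd h (by simp)
      · simp only [] at h
        split at h
        · exact ih ⟨c.qa, β, c.b2, _⟩ c' h
        · exact absurd h (by simp)
    | false =>
      rw [if_neg (by simp)] at h
      rcases hb : c.b2 with _ | ⟨b, β⟩ <;> rw [hb] at h
      · exact absurd h (by simp)
      · simp only [] at h
        split at h
        · exact ih ⟨c.qa, c.b1, β, _⟩ c' h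
        · exact absurd h (by simp)

end Spw2
namespace Spw2
open Spw

variable (nn : ℕ) (u v : Fin nn → List Bool) (idx : List (Fin nn))

lemma pushed_zero {S QA' : Type} (σ : S → Bool) (f : ℕ → S × QA') (j : Bool) :
    pushed σ f j 0 = 0 := by simp [pushed]

lemma pushed_succ {S QA' : Type} (σ : S → Bool) (f : ℕ → S × QA') (j : Bool) (n : ℕ) :
    pushed σ f j (n+1) = pushed σ f j n + (if σ (f n).1 = j then 1 else 0) := by
  unfold pushed
  rw [Finset.range_add_one, Finset.filter_insert]
  by_cases h : σ (f n).1 = j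
  · rw [if_pos h, if_pos h, Finset.card_insert_of_notMem (by simp)]
  · rw [if_neg h, if_neg h, add_zero]

lemma mid_inv (heq : (idx.map u).flatten = (idx.map v).flatten) (n : ℕ)
    (c : Cfg (AL nn u v) BL)
    (hC : CInv nn u v idx (pushed σPL (sp nn u v idx) true n)
      (pushed σPL (sp nn u v idx) false n) c) :
    CInv nn u v idx (pushed σPL (sp nn u v idx) true (n+1))
      (pushed σPL (sp nn u v idx) false (n+1)) (midCfg σPL c (sp nn u v idx n)) := by
  obtain ⟨c1, c2, hc1, hc2, hb1, hb2, hB⟩ := hC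
  by_cases hσ : σPL (sp nn u v idx n).1 = true
  · have hp1 : pushed σPL (sp nn u v idx) true (n+1)
        = pushed σPL (sp nn u v idx) true n + 1 := by
      rw [pushed_succ, if_pos hσ]
    have hp2 : pushed σPL (sp nn u v idx) false (n+1)
        = pushed σPL (sp nn u v idx) false n := by
      rw [pushed_succ, if_neg (by simp [hσ]), add_zero]
    have hlet : (sp nn u v idx n).1
        = αf nn u idx (pushed σPL (sp nn u v idx) true n) :=
      (sp_letter nn u v idx heq n).1 hσ
    refine ⟨c1, c2, by omega, by omega, ?_, ?_, ?_⟩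
    · show (if σPL (sp nn u v idx n).1 then c.b1 ++ [(sp nn u v idx n).1] else c.b1) = _
      rw [if_pos hσ, hb1, hlet, hp1]
      rw [show pushed σPL (sp nn u v idx) true n + 1 - c1
          = (pushed σPL (sp nn u v idx) true n - c1) + 1 from by omega]
      rw [List.range'_concat, List.map_append]
      congr 2
      rw [show c1 + 1 * (pushed σPL (sp nn u v idx) true n - c1)
          = pushed σPL (sp nn u v idx) true n from by omega]
    · show (if σPL (sp nn u v idx n).1 then c.b2 else c.b2 ++ [(sp nn u v idx n).1]) = _
      rw [if_pos hσ, hb2, hp2]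
    · exact hB
  · have hσ' : σPL (sp nn u v idx n).1 = false := by
      cases h : σPL (sp nn u v idx n).1
      · rfl
      · exact absurd h hσ
    have hp1 : pushed σPL (sp nn u v idx) true (n+1)
        = pushed σPL (sp nn u v idx) true n := by
      rw [pushed_succ, if_neg (by simp [hσ']), add_zero]
    have hp2 : pushed σPL (sp nn u v idx) false (n+1)
        = pushed σPL (sp nn u v idx) false n + 1 := by
      rw [pushed_succ, if_pos hσ']
    have hlet : (sp nn u v idx n).1
        = βf nn u idx (pushed σPL (sp nn u v idx) false n) :=
      (sp_letter nn u v idx heq n).2 hσ'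
    refine ⟨c1, c2, by omega, by omega, ?_, ?_, ?_⟩
    · show (if σPL (sp nn u v idx n).1 then c.b1 ++ [(sp nn u v idx n).1] else c.b1) = _
      rw [hσ', if_neg (by simp), hb1, hp1]
    · show (if σPL (sp nn u v idx n).1 then c.b2 else c.b2 ++ [(sp nn u v idx n).1]) = _
      rw [hσ', if_neg (by simp), hb2, hlet, hp2]
      rw [show pushed σPL (sp nn u v idx) false n + 1 - c2
          = (pushed σPL (sp nn u v idx) false n - c2) + 1 from by omega]
      rw [List.range'_concat, List.map_append]
      congr 2
      rw [show c2 + 1 * (pushed σPL (sp nn u v idx) false n - c2)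
          = pushed σPL (sp nn u v idx) false n from by omega]
    · exact hB

lemma playCfg_succ_eq {S : Type} (A B : BA S) (σ : S → Bool) (f : ℕ → S × A.Q)
    (dm : ℕ → List (Bool × B.Q)) (n : ℕ) (c : Cfg A B)
    (hc : playCfg A B σ f dm n = some c) :
    playCfg A B σ f dm (n+1)
      = if A.trans c.qa (f n).1 (f n).2 then dupApply A B (midCfg σ c (f n)) (dm n)
        else none := by
  rw [playCfg, hc]

lemma play_inv (heq : (idx.map u).flatten = (idx.map v).flatten)
    (dm : ℕ → List (Bool × BL.Q)) :
    ∀ n (c : Cfg (AL nn u v) BL),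
      playCfg (AL nn u v) BL σPL (sp nn u v idx) dm n = some c →
      CInv nn u v idx (pushed σPL (sp nn u v idx) true n)
        (pushed σPL (sp nn u v idx) false n) c := by
  intro n
  induction n with
  | zero =>
    intro c hc
    erw [playCfg] at hc
    cases hc
    refine ⟨0, 0, Nat.zero_le _, Nat.zero_le _, ?_, ?_, Or.inl ⟨rfl, rfl⟩⟩
    · rw [pushed_zero]; rfl
    · rw [pushed_zero]; rfl
  | succ m ih =>
    intro c hc
    rcases hpc : playCfg (AL nn u v) BL σPL (sp nn u v idx) dm m with _ | c₀
    · erw [playCfg, hpc] at hc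
      exact absurd hc (by simp)
    · rw [playCfg_succ_eq _ _ _ _ _ _ _ hpc] at hc
      split at hc
      · exact (dup_inv nn u v idx _ _ (dm m) _ c (mid_inv nn u v idx heq m c₀ (ih c₀ hpc)) hc).1
      · exact absurd hc (by simp)

lemma play_qa (dm : ℕ → List (Bool × BL.Q)) :
    ∀ n (c : Cfg (AL nn u v) BL),
      playCfg (AL nn u v) BL σPL (sp nn u v idx) dm n = some c →
      c.qa = stq nn u v idx n := by
  intro n
  cases n with
  | zero =>
    intro c hc
    erw [playCfg] at hc
    cases hc
    rfl
  | succ m =>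
    intro c hc
    rcases hpc : playCfg (AL nn u v) BL σPL (sp nn u v idx) dm m with _ | c₀
    · erw [playCfg, hpc] at hc
      exact absurd hc (by simp)
    · rw [playCfg_succ_eq _ _ _ _ _ _ _ hpc] at hc
      split at hc
      · have := dupApply_qa (AL nn u v) BL (dm m) _ c hc
        rw [this]
        show (sp nn u v idx m).2 = stq nn u v idx (m+1)
        unfold stq
        rw [if_neg (by omega), Nat.add_sub_cancel]
      · exact absurd hc (by simp)

noncomputable def dmOf
    (dstrat : List ((PL × QA nn) × List (Bool × Fin 7)) → (PL × QA nn) → List (Bool × Fin 7)) :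
    ℕ → List (Bool × Fin 7)
  | n => dstrat (List.ofFn fun i : Fin n =>
      (sp nn u v idx i, dmOf dstrat i)) (sp nn u v idx n)
decreasing_by exact i.isLt

end Spw2
/-- If the PCP instance `L = {(u i, v i)}` (with nonempty words)
has a solution, then Spoiler wins the two-buffer simulation game with two unbounded
buffers on `𝒜_L` and `ℬ_L`: `𝒜_L ⋢(ω,ω) ℬ_L`. -/
theorem pcp_solution_implies_spoiler_wins (nn : ℕ) (u v : Fin nn → List Bool)
    (hu : ∀ i, u i ≠ []) (hv : ∀ i, v i ≠ [])
    (hsol : ∃ idx : List (Fin nn), idx ≠ [] ∧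
      (idx.map u).flatten = (idx.map v).flatten) :
    ¬ Sim2 (AL nn u v) BL σPL ⊤ ⊤ := by
  open Spw2 in
  rintro ⟨dstrat, hws⟩
  obtain ⟨idx, hne, heq⟩ := hsol
  have hcons : Consistent (AL nn u v) BL dstrat (sp nn u v idx) (dmOf nn u v idx dstrat) := by
    intro n
    erw [dmOf]; rfl
  have hleg : SpLegal (AL nn u v) BL σPL (sp nn u v idx) (dmOf nn u v idx dstrat) := by
    intro n c hc
    rw [play_qa nn u v idx _ n c hc]
    exact run_valid nn u v idx hu hv hne n
  obtain ⟨hsome, hwin⟩ := hws (sp nn u v idx) (dmOf nn u v idx dstrat) hcons hleg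
  rcases hwin.2 with ⟨N, hN⟩ | ⟨-, hacc⟩
  · exact hN ((steps nn u v idx).length + 2*N + 1) (by omega)
      (show _ = Sum.inl 3 from sp_acc nn u v idx N)
  · obtain ⟨m, -, x, hx, hx5⟩ := hacc 0
    obtain ⟨c, hc⟩ := Option.isSome_iff_exists.1 (hsome m)
    obtain ⟨c', hc'⟩ := Option.isSome_iff_exists.1 (hsome (m+1))
    rw [playCfg_succ_eq _ _ _ _ _ _ _ hc, if_pos (hleg m c hc)] at hc'
    have hmid := mid_inv nn u v idx heq m c (play_inv nn u v idx heq _ m c hc)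
    exact (dup_inv nn u v idx _ _ _ _ c' hmid hc').2 x hx hx5
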